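/- If M_Po is invertible, then M is invertible and M⁻¹ = (b/a)·M_Po⁻¹ + (m/a)·e₁e₁ᵀ. -/

import Mathlib

open Matrix Real Finset

lemma aux_mul_vecMulVec {p : ℕ} (A : Matrix (Fin p) (Fin p) ℝ) (u v : Fin p → ℝ) :
    A * Matrix.vecMulVec u v = Matrix.vecMulVec (A *ᵥ u) v := by
  ext i j
  simp only [Matrix.mul_apply, Matrix.vecMulVec_apply, Matrix.mulVec, dotProduct,
    Finset.sum_mul]
  exact Finset.sum_congr rfl fun k _ => by ring

lemma aux_vecMulVec_mul_vecMulVec {p : ℕ} (u v x y : Fin p → ℝ) :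
    Matrix.vecMulVec u v * Matrix.vecMulVec x y = (v ⬝ᵥ x) • Matrix.vecMulVec u y := by
  ext i j
  simp only [Matrix.mul_apply, Matrix.vecMulVec_apply, Matrix.smul_apply, dotProduct,
    smul_eq_mul, Finset.sum_mul, Finset.mul_sum]
  exact Finset.sum_congr rfl fun k _ => by ring

/-- If `M_Po` is invertible then `M` is invertible with
`M⁻¹ = (b/a)·M_Po⁻¹ + (m/a)·e₁e₁ᵀ`. -/
theorem inverse_information_matrix
    (a b m : ℝ) (ha : 0 < a) (hb : 0 < b) (hm : 0 < m)
    (p : ℕ) (hp : 1 ≤ p)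
    (e1 : Fin p → ℝ) (he1 : e1 = fun i : Fin p => if (i : ℕ) = 0 then (1:ℝ) else 0)
    (MPo : Matrix (Fin p) (Fin p) ℝ) (hMPo : MPo.PosSemidef)
    (M : Matrix (Fin p) (Fin p) ℝ)
    (hM : M = (a / b) • (MPo -
      (e1 ⬝ᵥ (MPo *ᵥ e1) + b / m)⁻¹ •
        (MPo * Matrix.vecMulVec e1 e1 * MPo)))
    (hinv : IsUnit MPo) :
    IsUnit M ∧ M⁻¹ = (b / a) • MPo⁻¹ + (m / a) • Matrix.vecMulVec e1 e1 := by
  set E := Matrix.vecMulVec e1 e1 with hE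
  set s := e1 ⬝ᵥ (MPo *ᵥ e1) with hs
  have hs0 : 0 ≤ s := by
    have := hMPo.dotProduct_mulVec_nonneg e1
    simpa [hs] using this
  have hc : s + b / m ≠ 0 := by positivity
  have hdet : IsUnit MPo.det := (Matrix.isUnit_iff_isUnit_det MPo).mp hinv
  have h1 : MPo * MPo⁻¹ = 1 := Matrix.mul_nonsing_inv MPo hdet
  have hK1 : MPo * E * MPo * MPo⁻¹ = MPo * E := by
    rw [Matrix.mul_assoc, h1, Matrix.mul_one]
  have hME : MPo * E = Matrix.vecMulVec (MPo *ᵥ e1) e1 := aux_mul_vecMulVec MPo e1 e1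
  have hK2 : MPo * E * MPo * E = s • (MPo * E) := by
    rw [Matrix.mul_assoc (MPo * E), hME, aux_vecMulVec_mul_vecMulVec]
  have hc1 : a / b * (b / a) = 1 := by field_simp
  have hc2 : a / b * (m / a) - a / b * ((s + b / m)⁻¹ * (b / a))
      - a / b * ((s + b / m)⁻¹ * (m / a * s)) = 0 := by
    field_simp
    ring
  have hMN : M * ((b / a) • MPo⁻¹ + (m / a) • E) = 1 := by
    have expand : M * ((b / a) • MPo⁻¹ + (m / a) • E)
        = (a / b * (b / a)) • (1 : Matrix (Fin p) (Fin p) ℝ)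
          + (a / b * (m / a) - a / b * ((s + b / m)⁻¹ * (b / a))
              - a / b * ((s + b / m)⁻¹ * (m / a * s))) • (MPo * E) := by
      rw [hM]
      simp only [Matrix.smul_mul, Matrix.mul_smul, Matrix.sub_mul, Matrix.mul_add]
      rw [h1, hK1, hK2]
      module
    rw [expand, hc1, hc2, one_smul, zero_smul, add_zero]
  have hNM : ((b / a) • MPo⁻¹ + (m / a) • E) * M = 1 := mul_eq_one_comm.mp hMN
  exact ⟨⟨⟨M, (b / a) • MPo⁻¹ + (m / a) • E, hMN, hNM⟩, rfl⟩, Matrix.inv_eq_right_inv hMN⟩
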